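/- arXiv:1301.0297 — 2 statements merged into one kernel-verified Lean document; each statement's English description precedes it below -/
import Mathlib

section
/- Every k×k submatrix of the generator matrix G of an (n,k) BCH-DFT code, formed from any k distinct rows of G, is invertible. -/
open Matrix Complex Finset

/-- Entry of the (unitary) DFT matrix: `(1/√n)·exp(-2πi·j·l/n)`. -/
noncomputable def dftEntry (n j l : ℕ) : ℂ :=
  (1 / (Real.sqrt n : ℂ)) * Complex.exp (-(2 * Real.pi * Complex.I * j * l) / n)

/-- The unitary `n×n` DFT matrix `W_n`. -/
noncomputable def Wmat (n : ℕ) : Matrix (Fin n) (Fin n) ℂ :=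
  Matrix.of fun j l => dftEntry n (j : ℕ) (l : ℕ)

/-- `α = ⌈n/2⌉ - ⌊(n-k)/2⌋`. -/
def alphaBCH (n k : ℕ) : ℕ := (n + 1) / 2 - (n - k) / 2

/-- The `n×k` selection matrix `Σ` with identity blocks `I_α` (top-left) and
`I_β` (bottom-right), `β = k - α`, and zeros elsewhere. -/
def SigmaMat (n k : ℕ) : Matrix (Fin n) (Fin k) ℂ :=
  Matrix.of fun r c =>
    if ((r : ℕ) = (c : ℕ) ∧ (c : ℕ) < alphaBCH n k) ∨
       ((r : ℕ) = (c : ℕ) + (n - k) ∧ alphaBCH n k ≤ (c : ℕ)) then 1 else 0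

/-- Generator matrix `G = √(n/k)·W_nᴴ·Σ·W_k` of the `(n,k)` BCH-DFT code. -/
noncomputable def Gmat (n k : ℕ) : Matrix (Fin n) (Fin k) ℂ :=
  ((Real.sqrt ((n : ℝ) / k) : ℝ) : ℂ) • ((Wmat n)ᴴ * SigmaMat n k * Wmat k)

/-- Parity-check matrix `H`: its rows are the conjugate transposes of the `n-k`
columns of `W_nᴴ` corresponding to the zero rows `α, …, n-β-1` of `Σ`. -/
noncomputable def Hmat (n k : ℕ) : Matrix (Fin (n - k)) (Fin n) ℂ :=
  Matrix.of fun r i => dftEntry n (alphaBCH n k + (r : ℕ)) (i : ℕ)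

/- ## Auxiliary lemmas -/

lemma exp_two_pi_nat_inj {n : ℕ} (hn : 0 < n) {a b : ℕ} (ha : a < n) (hb : b < n)
    (h : Complex.exp (2 * Real.pi * Complex.I * a / n) =
         Complex.exp (2 * Real.pi * Complex.I * b / n)) : a = b := by
  have h1 : Complex.exp (2 * Real.pi * Complex.I * a / n - 2 * Real.pi * Complex.I * b / n) = 1 := by
    rw [Complex.exp_sub, h, div_self (Complex.exp_ne_zero _)]
  rw [Complex.exp_eq_one_iff] at h1
  obtain ⟨m, hm⟩ := h1
  have hn0 : (n : ℂ) ≠ 0 := Nat.cast_ne_zero.mpr hn.ne'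
  have hπ : (2 * (Real.pi : ℂ) * Complex.I) ≠ 0 := by
    simp [Real.pi_ne_zero, Complex.I_ne_zero]
  have key : (2 * (Real.pi : ℂ) * Complex.I) * ((a : ℂ) - b) =
      (2 * (Real.pi : ℂ) * Complex.I) * ((m : ℂ) * n) := by
    field_simp at hm
    linear_combination (2 * (Real.pi : ℂ) * Complex.I) * hm
  have key2 : (a : ℂ) - b = (m : ℂ) * n := mul_left_cancel₀ hπ key
  have key3 : (a : ℤ) - b = m * n := by exact_mod_cast key2
  have han : (a : ℤ) < n := by exact_mod_cast ha
  have hbn : (b : ℤ) < n := by exact_mod_cast hb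
  have hm0 : m = 0 := by
    rcases lt_trichotomy m 0 with h'|h'|h'
    · nlinarith [Int.ofNat_nonneg a, Int.ofNat_nonneg b]
    · exact h'
    · nlinarith [Int.ofNat_nonneg a, Int.ofNat_nonneg b]
  rw [hm0] at key3
  simp at key3
  omega

lemma conj_dftEntry (n j l : ℕ) :
    (starRingEnd ℂ) (dftEntry n j l) =
      (1 / (Real.sqrt n : ℂ)) * Complex.exp (2 * Real.pi * Complex.I * j * l / n) := by
  unfold dftEntry
  rw [_root_.map_mul, ← Complex.exp_conj]
  congr 1
  · simp
  · congr 1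
    simp [map_div₀, map_neg, _root_.map_mul, Complex.conj_I, Complex.conj_ofReal, map_ofNat]

lemma det_vandermonde_unit {m : ℕ} {v : Fin m → ℂ} (hv : Function.Injective v) :
    (Matrix.vandermonde v).det ≠ 0 :=
  Matrix.det_vandermonde_ne_zero_iff.mpr hv

lemma sqrt_cast_ne_zero {m : ℕ} (hm : 0 < m) : ((Real.sqrt m : ℝ) : ℂ) ≠ 0 := by
  rw [Complex.ofReal_ne_zero]
  positivity

lemma Wmat_eq {m : ℕ} :
    Wmat m = (1 / (Real.sqrt m : ℂ)) •
      Matrix.vandermonde (fun j : Fin m => Complex.exp (-(2 * Real.pi * Complex.I * j) / m)) := by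
  ext j l
  simp only [Wmat, Matrix.of_apply, dftEntry, Matrix.smul_apply, Matrix.vandermonde_apply,
    smul_eq_mul]
  congr 1
  rw [← Complex.exp_nat_mul]
  congr 1
  field_simp

lemma Wmat_det_ne_zero {m : ℕ} (hm : 0 < m) : (Wmat m).det ≠ 0 := by
  rw [Wmat_eq, Matrix.det_smul]
  have hs : (1 / (Real.sqrt m : ℂ)) ≠ 0 := one_div_ne_zero (sqrt_cast_ne_zero hm)
  refine mul_ne_zero (pow_ne_zero _ hs) (det_vandermonde_unit ?_)
  intro a b hab
  have h1 : Complex.exp (2 * Real.pi * Complex.I * a / m) =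
      Complex.exp (2 * Real.pi * Complex.I * b / m) := by
    have := congrArg (·⁻¹) hab
    simp only [← Complex.exp_neg] at this
    convert this using 2 <;> ring
  exact Fin.ext (exp_two_pi_nat_inj hm a.isLt b.isLt h1)

/-- The exponent selected by column `c` of `Σ`. -/
def mexp (n k : ℕ) (c : Fin k) : ℕ :=
  if (c : ℕ) < alphaBCH n k then (c : ℕ) else (c : ℕ) + (n - k)

/-- **Every `k×k` submatrix of `G` is invertible.** Any `k` distinct rows of the
generator matrix `G` of an `(n,k)` BCH-DFT code form an invertible `k×k` matrix. -/
theorem Gmat_submatrix_invertible (n k : ℕ) (hk1 : 1 ≤ k) (hkn : k < n)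
    (f : Fin k → Fin n) (hf : Function.Injective f) :
    IsUnit ((Gmat n k).submatrix f id).det := by
  have hn : 0 < n := by omega
  have hk : 0 < k := hk1
  haveI : NeZero k := ⟨hk.ne'⟩
  have hαk : alphaBCH n k ≤ k := by unfold alphaBCH; omega
  -- the distinct roots of unity
  set x : Fin k → ℂ := fun r => Complex.exp (2 * Real.pi * Complex.I * (f r) / n) with hx
  have hxinj : Function.Injective x := by
    intro a b hab
    exact hf (Fin.ext (exp_two_pi_nat_inj hn (f a).isLt (f b).isLt hab))
  have hxn : ∀ r, x r ^ n = 1 := by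
    intro r
    rw [hx]
    simp only
    rw [← Complex.exp_nat_mul, Complex.exp_eq_one_iff]
    refine ⟨(f r : ℕ), ?_⟩
    have hn0 : (n : ℂ) ≠ 0 := Nat.cast_ne_zero.mpr hn.ne'
    push_cast
    field_simp
  have hxpow : ∀ (r : Fin k) (e : ℕ),
      Complex.exp (2 * Real.pi * Complex.I * e * (f r) / n) = x r ^ e := by
    intro r e
    rw [hx]
    simp only
    rw [← Complex.exp_nat_mul]
    congr 1
    push_cast
    ring
  have hmlt : ∀ c : Fin k, mexp n k c < n := by
    intro c
    unfold mexp
    split <;> omega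
  -- entries of Wᴴ·Σ
  have hB : ∀ (j : Fin n) (c : Fin k),
      ((Wmat n)ᴴ * SigmaMat n k) j c
        = (1 / (Real.sqrt n : ℂ)) *
            Complex.exp (2 * Real.pi * Complex.I * (mexp n k c) * j / n) := by
    intro j c
    rw [Matrix.mul_apply]
    rw [Finset.sum_eq_single (⟨mexp n k c, hmlt c⟩ : Fin n)]
    · have hone : SigmaMat n k ⟨mexp n k c, hmlt c⟩ c = 1 := by
        have hcond : ((mexp n k c = (c : ℕ)) ∧ (c : ℕ) < alphaBCH n k) ∨
            ((mexp n k c = (c : ℕ) + (n - k)) ∧ alphaBCH n k ≤ (c : ℕ)) := by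
          unfold mexp
          by_cases hc : (c : ℕ) < alphaBCH n k
          · exact Or.inl ⟨if_pos hc, hc⟩
          · exact Or.inr ⟨if_neg hc, le_of_not_gt hc⟩
        simp only [SigmaMat, Matrix.of_apply]
        exact if_pos hcond
      rw [hone, mul_one, Matrix.conjTranspose_apply]
      show (starRingEnd ℂ) (Wmat n ⟨mexp n k c, hmlt c⟩ j) = _
      rw [Wmat, Matrix.of_apply]
      exact conj_dftEntry n (mexp n k c) j
    · intro l _ hl
      have hlv : (l : ℕ) ≠ mexp n k c := fun h => hl (Fin.ext h)
      have hzero : SigmaMat n k l c = 0 := by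
        simp only [SigmaMat, Matrix.of_apply]
        rw [if_neg]
        rintro (⟨h1, h2⟩ | ⟨h1, h2⟩)
        · exact hlv (by unfold mexp; rw [if_pos h2]; exact h1)
        · exact hlv (by unfold mexp; rw [if_neg (not_lt.mpr h2)]; exact h1)
      rw [hzero, mul_zero]
    · intro h
      exact absurd (Finset.mem_univ _) h
  -- the column permutation
  open Fin.NatCast in set σ : Equiv.Perm (Fin k) := Equiv.addRight ((alphaBCH n k : Fin k)) with hσdef
  have hσval : ∀ j : Fin k, ((σ j : Fin k) : ℕ) = ((j : ℕ) + alphaBCH n k) % k := by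
    intro j
    rw [hσdef]
    simp only [Equiv.coe_addRight]
    rw [Fin.add_def]
    open Fin.NatCast in simp only [Fin.val_natCast]
    conv_rhs => rw [Nat.add_mod]
    rw [Nat.mod_eq_of_lt j.isLt]
  -- key exponent identity
  have hkey : ∀ (r j : Fin k),
      x r ^ (mexp n k (σ j)) = x r ^ (n - k + alphaBCH n k) * x r ^ (j : ℕ) := by
    intro r j
    have hσ := hσval j
    by_cases hcase : (j : ℕ) + alphaBCH n k < k
    · have hc : ((σ j : Fin k) : ℕ) = (j : ℕ) + alphaBCH n k := by
        rw [hσ, Nat.mod_eq_of_lt hcase]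
      have hge : ¬ ((σ j : Fin k) : ℕ) < alphaBCH n k := by omega
      unfold mexp
      rw [if_neg hge, hc, ← pow_add]
      congr 1
      omega
    · have hc : ((σ j : Fin k) : ℕ) = (j : ℕ) + alphaBCH n k - k := by
        rw [hσ, Nat.mod_eq_sub_mod (le_of_not_gt hcase), Nat.mod_eq_of_lt (by omega)]
      have hlt : ((σ j : Fin k) : ℕ) < alphaBCH n k := by
        have := j.isLt
        omega
      unfold mexp
      rw [if_pos hlt, hc]
      have heq : x r ^ ((j : ℕ) + alphaBCH n k - k) * x r ^ n
          = x r ^ (n - k + alphaBCH n k) * x r ^ (j : ℕ) := by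
        rw [← pow_add, ← pow_add]
        congr 1
        omega
      calc x r ^ ((j : ℕ) + alphaBCH n k - k)
          = x r ^ ((j : ℕ) + alphaBCH n k - k) * x r ^ n := by rw [hxn, mul_one]
        _ = x r ^ (n - k + alphaBCH n k) * x r ^ (j : ℕ) := heq
  -- the submatrix, columns permuted, is a scaled Vandermonde matrix
  set M : Matrix (Fin k) (Fin k) ℂ := ((Wmat n)ᴴ * SigmaMat n k).submatrix f id with hMdef
  have hMσ : M.submatrix id σ
      = Matrix.of (fun r j => ((1 / (Real.sqrt n : ℂ)) * x r ^ (n - k + alphaBCH n k)) *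
          Matrix.vandermonde x r j) := by
    ext r j
    simp only [Matrix.submatrix_apply, id_eq, hMdef, Matrix.of_apply, Matrix.vandermonde_apply]
    rw [hB (f r) (σ j), hxpow, hkey]
    ring
  have hMσdet : (M.submatrix id σ).det ≠ 0 := by
    rw [hMσ, Matrix.det_mul_column]
    refine mul_ne_zero (Finset.prod_ne_zero_iff.mpr ?_) (det_vandermonde_unit hxinj)
    intro r _
    exact mul_ne_zero (one_div_ne_zero (sqrt_cast_ne_zero hn))
      (pow_ne_zero _ (Complex.exp_ne_zero _))
  have hMdet : M.det ≠ 0 := by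
    intro h0
    apply hMσdet
    rw [Matrix.det_permute', h0, mul_zero]
  -- assemble
  have hsub : (Gmat n k).submatrix f id
      = ((Real.sqrt ((n : ℝ) / k) : ℝ) : ℂ) • (M * Wmat k) := by
    ext r c
    simp only [Gmat, Matrix.submatrix_apply, Matrix.smul_apply, id_eq, Matrix.mul_apply,
      hMdef, smul_eq_mul]
  rw [hsub, isUnit_iff_ne_zero, Matrix.det_smul, Matrix.det_mul]
  have hc : ((Real.sqrt ((n : ℝ) / k) : ℝ) : ℂ) ≠ 0 := by
    rw [Complex.ofReal_ne_zero]
    have : (0 : ℝ) < (n : ℝ) / k := by positivity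
    positivity
  exact mul_ne_zero (pow_ne_zero _ hc) (mul_ne_zero hMdet (Wmat_det_ne_zero hk))
end

section
/- Any k rows of the generator matrix G of an (n,k) BCH-DFT code span ℂ^k; equivalently, every subframe of G consisting of at least k rows has rank k. -/
open Matrix Complex Finset

lemma exp_inj_aux (n : ℕ) (hn : 0 < n) {a b : ℕ} (ha : a < n) (hb : b < n)
    (h : Complex.exp (2 * Real.pi * Complex.I * a / n) = Complex.exp (2 * Real.pi * Complex.I * b / n)) :
    a = b := by
  have hprim := Complex.isPrimitiveRoot_exp n hn.ne'
  apply hprim.pow_inj ha hb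
  have e : ∀ m : ℕ, Complex.exp (2 * ↑Real.pi * Complex.I / n) ^ m
      = Complex.exp (2 * Real.pi * Complex.I * m / n) := by
    intro m
    rw [← Complex.exp_nat_mul]
    ring_nf
  rw [e, e, h]

lemma det_Wmat_ne_zero (k : ℕ) (hk : 0 < k) : det (Wmat k) ≠ 0 := by
  have hW : Wmat k = ((1 / Real.sqrt k : ℝ) : ℂ) •
      Matrix.vandermonde (fun j : Fin k => Complex.exp (-(2 * Real.pi * Complex.I * j) / k)) := by
    ext j l
    simp only [Wmat, dftEntry, Matrix.of_apply, Matrix.smul_apply, Matrix.vandermonde_apply,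
      smul_eq_mul]
    rw [← Complex.exp_nat_mul]
    push_cast
    ring_nf
  rw [hW, Matrix.det_smul]
  apply mul_ne_zero
  · apply pow_ne_zero
    simp only [ne_eq, Complex.ofReal_eq_zero, div_eq_zero_iff, one_ne_zero, false_or]
    positivity
  · rw [Matrix.det_vandermonde_ne_zero_iff]
    intro a b h
    have h' : Complex.exp (2 * Real.pi * Complex.I * a / k) = Complex.exp (2 * Real.pi * Complex.I * b / k) := by
      have := congrArg (starRingEnd ℂ) h
      rw [← Complex.exp_conj, ← Complex.exp_conj] at this
      simpa [map_div₀, map_neg, _root_.map_mul, Complex.conj_I, Complex.conj_ofReal,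
        map_natCast, map_ofNat, neg_mul, neg_neg, neg_div] using this
    exact Fin.ext (exp_inj_aux k hk a.2 b.2 h')

/-- **Any `k` rows of `G` span `ℂ^k`.** Any `k` distinct rows of the generator
matrix `G` of an `(n,k)` BCH-DFT code are linearly independent (hence span `ℂ^k`). -/
theorem Gmat_rows_linearIndependent (n k : ℕ) (hk1 : 1 ≤ k) (hkn : k < n)
    (f : Fin k → Fin n) (hf : Function.Injective f) :
    LinearIndependent ℂ (fun a : Fin k => Gmat n k (f a)) := by
  haveI : NeZero k := ⟨by omega⟩
  have hn0 : 0 < n := by omega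
  set α := alphaBCH n k with hα
  have hαk : α ≤ k := by rw [hα, alphaBCH]; omega
  set β := k - α with hβdef
  set θ : Fin k → ℂ := fun a => 2 * Real.pi * Complex.I * ((f a : ℕ) : ℂ) / n with hθ
  set z : Fin k → ℂ := fun a => Complex.exp (θ a) with hz
  set d : Fin k → ℂ := fun a => Complex.exp (-(β : ℂ) * θ a) with hd
  set b : Fin k := ⟨β % k, Nat.mod_lt β (by omega)⟩ with hb
  set σp : Equiv.Perm (Fin k) := Equiv.addRight b with hσp
  have hmval : ∀ c : Fin k, ((σp c : Fin k) : ℕ) = ((c : ℕ) + β) % k := by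
    intro c
    show ((c + b : Fin k) : ℕ) = _
    rw [Fin.add_def]
    conv_rhs => rw [Nat.add_mod]
    rw [Nat.mod_eq_of_lt c.2]
  have hm1 : ∀ c : Fin k, (c : ℕ) < α → ((c : ℕ) + β) % k = (c : ℕ) + β := by
    intro c hc; exact Nat.mod_eq_of_lt (by omega)
  have hm2 : ∀ c : Fin k, α ≤ (c : ℕ) → ((c : ℕ) + β) % k = (c : ℕ) + β - k := by
    intro c hc
    have h1 : k ≤ (c : ℕ) + β := by omega
    rw [Nat.mod_eq_sub_mod h1, Nat.mod_eq_of_lt (by omega)]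
  set σnat : Fin k → ℕ := fun c => if (c : ℕ) < α then (c : ℕ) else (c : ℕ) + (n - k) with hσnat
  have hσlt : ∀ c : Fin k, σnat c < n := by
    intro c
    show (if (c : ℕ) < α then (c : ℕ) else (c : ℕ) + (n - k)) < n
    split <;> omega
  have hSig : ∀ (j : Fin n) (c : Fin k), SigmaMat n k j c = if (j : ℕ) = σnat c then 1 else 0 := by
    intro j c
    simp only [SigmaMat, Matrix.of_apply, ← hα, hσnat]
    split_ifs <;> first | rfl | (exfalso; omega)
  have hsum : ∀ (a : Fin k) (c : Fin k),
      ((Wmat n)ᴴ * SigmaMat n k) (f a) c = (starRingEnd ℂ) (dftEntry n (σnat c) ((f a : ℕ))) := by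
    intro a c
    rw [Matrix.mul_apply, Finset.sum_eq_single (⟨σnat c, hσlt c⟩ : Fin n)]
    · rw [hSig]
      simp [Matrix.conjTranspose_apply, Wmat]
    · intro j _ hj
      rw [hSig, if_neg, mul_zero]
      exact fun hh => hj (Fin.ext hh)
    · intro h
      exact absurd (Finset.mem_univ _) h
  have hkey : ∀ (a : Fin k) (c : Fin k),
      (starRingEnd ℂ) (dftEntry n (σnat c) ((f a : ℕ)))
        = ((1 / Real.sqrt n : ℝ) : ℂ) * (d a * z a ^ (((c : ℕ) + β) % k)) := by
    intro a c
    have hconj : (starRingEnd ℂ) (dftEntry n (σnat c) ((f a : ℕ)))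
        = ((1 / Real.sqrt n : ℝ) : ℂ)
          * Complex.exp (2 * Real.pi * Complex.I * (σnat c : ℂ) * ((f a : ℕ) : ℂ) / n) := by
      simp only [dftEntry, _root_.map_mul, map_div₀, _root_.map_one, map_natCast, map_neg,
        map_ofNat, Complex.conj_ofReal, ← Complex.exp_conj, Complex.conj_I]
      push_cast
      ring_nf
    rw [hconj, hz, hd]
    congr 1
    rw [← Complex.exp_nat_mul, ← Complex.exp_add]
    by_cases h : (c : ℕ) < α
    · rw [hm1 c h]
      have h1 : σnat c = (c : ℕ) := if_pos h
      rw [hθ, h1]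
      push_cast
      field_simp
      ring
    · rw [hm2 c (le_of_not_gt h)]
      have h1 : σnat c = (c : ℕ) + (n - k) := if_neg h
      have harg : 2 * (Real.pi : ℂ) * Complex.I * ((σnat c : ℕ) : ℂ) * ((f a : ℕ) : ℂ) / n
          = (-(β : ℂ) + (((c : ℕ) + β - k : ℕ) : ℂ)) * θ a + ((f a : ℕ) : ℂ) * (2 * Real.pi * Complex.I) := by
        rw [h1, hθ]
        have e1 : (((c : ℕ) + (n - k) : ℕ) : ℂ) = (c : ℕ) + ((n : ℂ) - k) := by
          push_cast [Nat.cast_sub hkn.le]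
          ring
        have e2 : ((((c : ℕ) + β - k : ℕ)) : ℂ) = (c : ℕ) + (β : ℂ) - k := by
          have hkc : k ≤ (c : ℕ) + β := by omega
          push_cast [Nat.cast_sub hkc]
          ring
        rw [e1, e2]
        have hnne : (n : ℂ) ≠ 0 := Nat.cast_ne_zero.mpr hn0.ne'
        field_simp
        ring
      rw [harg, Complex.exp_add, Complex.exp_nat_mul_two_pi_mul_I, mul_one]
      congr 1
      ring
  -- the matrix identity
  have hE : (Gmat n k).submatrix f id
      = ((((Real.sqrt ((n : ℝ) / k) : ℝ) : ℂ) * ((1 / Real.sqrt n : ℝ) : ℂ)) •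
        (Matrix.diagonal d * (Matrix.vandermonde z).submatrix id σp * Wmat k)) := by
    ext a c
    simp only [Matrix.submatrix_apply, Matrix.smul_apply, Gmat, smul_eq_mul, id]
    rw [Matrix.mul_apply, Matrix.mul_apply, Finset.mul_sum, Finset.mul_sum]
    apply Finset.sum_congr rfl
    intro l _
    rw [hsum a l, hkey a l, Matrix.diagonal_mul, Matrix.submatrix_apply,
      Matrix.vandermonde_apply, hmval l]
    simp only [id_eq]
    ring
  have hdet : det ((Gmat n k).submatrix f id) ≠ 0 := by
    rw [hE, Matrix.det_smul, Matrix.det_mul, Matrix.det_mul, Matrix.det_permute' σp,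
      Matrix.det_diagonal]
    apply mul_ne_zero
    · apply pow_ne_zero
      apply mul_ne_zero
      · simp only [ne_eq, Complex.ofReal_eq_zero]
        positivity
      · simp only [ne_eq, Complex.ofReal_eq_zero, div_eq_zero_iff, one_ne_zero, false_or]
        positivity
    · apply mul_ne_zero
      · apply mul_ne_zero
        · rw [Finset.prod_ne_zero_iff]
          intro a _
          rw [hd]
          exact Complex.exp_ne_zero _
        · apply mul_ne_zero
          · rcases Int.units_eq_one_or (Equiv.Perm.sign σp) with h | h <;> simp [h]
          · rw [Matrix.det_vandermonde_ne_zero_iff]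
            intro a a' hzz
            rw [hz] at hzz
            simp only [hθ] at hzz
            exact hf (Fin.ext (exp_inj_aux n hn0 (f a).2 (f a').2 hzz))
      · exact det_Wmat_ne_zero k (by omega)
  have heq : (fun a : Fin k => Gmat n k (f a)) = ((Gmat n k).submatrix f id).row := rfl
  rw [heq, Matrix.linearIndependent_rows_iff_isUnit, Matrix.isUnit_iff_isUnit_det,
    isUnit_iff_ne_zero]
  exact hdet
end
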